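/- Let p ≥ 1, r ≥ 0 and n ≥ 1 be integers. Let α and β be real polynomial functions of degree at most 1, let g₀ ∈ S^p_{r+1}(n) and g₁ ∈ S^{p−1}_r(n). Then the function v ↦ β(v)·g₀'(v) + α(v)·g₁(v) belongs to S^p_r(n); consequently, the function g(u,v) = g₀(v) + (β(v)·g₀'(v) + α(v)·g₁(v))·u is, for each fixed u, a function of v lying in S^p_r(n), and is a polynomial of degree at most 1 in u for each fixed v. (This is the constructive core of Theorem 5.1: over an analysis-suitable G¹ two-patch geometry, every pair (g₀, g₁) ∈ S^p_{r+1} × S^{p−1}_r of trace and transversal derivative data is realized by tensor-product splines of degree p and continuity r on each patch.) -/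

import Mathlib

/-- `S^p_r(n)`: the space of functions `f : [0,1] → ℝ` that are `r` times continuously
differentiable on `[0,1]` and coincide, on each interval `[i/n, (i+1)/n]` for
`i = 0,…,n−1`, with a polynomial of degree at most `p`. -/
def IsSpline (p r n : ℕ) (f : ℝ → ℝ) : Prop :=
  ContDiffOn ℝ r f (Set.Icc 0 1) ∧
  ∀ i : ℕ, i < n →
    ∃ q : Polynomial ℝ, q.natDegree ≤ p ∧
      ∀ x ∈ Set.Icc ((i : ℝ) / n) (((i : ℝ) + 1) / n), f x = q.eval x

/-- Constructive core of Theorem 5.1: for linear α, β and data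
`(g₀, g₁) ∈ S^p_{r+1}(n) × S^{p−1}_r(n)`, the combination `β·g₀' + α·g₁` lies in
`S^p_r(n)`; consequently `g(u,v) = g₀(v) + (β(v)·g₀'(v) + α(v)·g₁(v))·u` is, for each
fixed `u`, a spline in `S^p_r(n)` as a function of `v`, and a polynomial of degree at
most 1 in `u` for each fixed `v`. -/
theorem stmt11 (p r n : ℕ) (hp : 1 ≤ p) (hr : 0 ≤ r) (hn : 1 ≤ n)
    (α β : ℝ → ℝ)
    (hα : ∃ a b : ℝ, ∀ v, α v = a + b * v)
    (hβ : ∃ a b : ℝ, ∀ v, β v = a + b * v)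
    (g₀ g₁ : ℝ → ℝ)
    (hg₀ : IsSpline p (r + 1) n g₀) (hg₁ : IsSpline (p - 1) r n g₁)
    (g : ℝ → ℝ → ℝ)
    (hg : ∀ u v : ℝ,
      g u v = g₀ v + (β v * derivWithin g₀ (Set.Icc 0 1) v + α v * g₁ v) * u) :
    IsSpline p r n (fun v => β v * derivWithin g₀ (Set.Icc 0 1) v + α v * g₁ v) ∧
    (∀ u : ℝ, IsSpline p r n (fun v => g u v)) ∧
    (∀ v : ℝ, ∃ c d : ℝ, ∀ u : ℝ, g u v = c + d * u) := by
  obtain ⟨a₁, b₁, hα'⟩ := hα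
  obtain ⟨a₂, b₂, hβ'⟩ := hβ
  have hαc : ContDiff ℝ r α := by
    have h : α = fun v => a₁ + b₁ * v := funext hα'
    rw [h]; exact contDiff_const.add (contDiff_const.mul contDiff_id)
  have hβc : ContDiff ℝ r β := by
    have h : β = fun v => a₂ + b₂ * v := funext hβ'
    rw [h]; exact contDiff_const.add (contDiff_const.mul contDiff_id)
  have hd0 : ContDiffOn ℝ r (derivWithin g₀ (Set.Icc 0 1)) (Set.Icc (0:ℝ) 1) :=
    hg₀.1.derivWithin (uniqueDiffOn_Icc one_pos) (by norm_cast)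
  have hnR : (0:ℝ) < n := by exact_mod_cast hn
  have key : IsSpline p r n (fun v => β v * derivWithin g₀ (Set.Icc 0 1) v + α v * g₁ v) := by
    constructor
    · exact (hβc.contDiffOn.mul hd0).add (hαc.contDiffOn.mul hg₁.1)
    · intro i hi
      obtain ⟨q0, hq0deg, hq0⟩ := hg₀.2 i hi
      obtain ⟨q1, hq1deg, hq1⟩ := hg₁.2 i hi
      have hab : (i:ℝ)/n < ((i:ℝ)+1)/n := by
        apply div_lt_div_of_pos_right ?_ hnR
        linarith
      have hsub : Set.Icc ((i:ℝ)/n) (((i:ℝ)+1)/n) ⊆ Set.Icc (0:ℝ) 1 := by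
        apply Set.Icc_subset_Icc
        · positivity
        · rw [div_le_one hnR]
          exact_mod_cast hi
      refine ⟨(Polynomial.C a₂ + Polynomial.C b₂ * Polynomial.X) * q0.derivative
        + (Polynomial.C a₁ + Polynomial.C b₁ * Polynomial.X) * q1, ?_, ?_⟩
      · have hlin : ∀ c d : ℝ, (Polynomial.C c + Polynomial.C d * Polynomial.X).natDegree ≤ 1 := by
          intro c d
          refine le_trans (Polynomial.natDegree_add_le _ _) (max_le (by simp) ?_)
          exact le_trans Polynomial.natDegree_mul_le (by simp)
        have hdq : q0.derivative.natDegree ≤ p - 1 :=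
          le_trans (Polynomial.natDegree_derivative_le q0) (Nat.sub_le_sub_right hq0deg 1)
        refine le_trans (Polynomial.natDegree_add_le _ _) (max_le ?_ ?_)
        · have := le_trans (Polynomial.natDegree_mul_le
            (p := Polynomial.C a₂ + Polynomial.C b₂ * Polynomial.X) (q := q0.derivative))
            (add_le_add (hlin a₂ b₂) hdq)
          omega
        · have := le_trans (Polynomial.natDegree_mul_le
            (p := Polynomial.C a₁ + Polynomial.C b₁ * Polynomial.X) (q := q1))
            (add_le_add (hlin a₁ b₁) hq1deg)
          omega
      · intro x hx
        have hxI : x ∈ Set.Icc (0:ℝ) 1 := hsub hx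
        have hdiff : DifferentiableWithinAt ℝ g₀ (Set.Icc 0 1) x :=
          (hg₀.1.differentiableOn (by simp)) x hxI
        have h1 : HasDerivWithinAt g₀ (derivWithin g₀ (Set.Icc 0 1) x)
            (Set.Icc ((i:ℝ)/n) (((i:ℝ)+1)/n)) x := hdiff.hasDerivWithinAt.mono hsub
        have h2 : HasDerivWithinAt (fun y => q0.eval y) (derivWithin g₀ (Set.Icc 0 1) x)
            (Set.Icc ((i:ℝ)/n) (((i:ℝ)+1)/n)) x :=
          h1.congr (fun y hy => (hq0 y hy).symm) (hq0 x hx).symm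
        have hu : UniqueDiffWithinAt ℝ (Set.Icc ((i:ℝ)/n) (((i:ℝ)+1)/n)) x :=
          (uniqueDiffOn_Icc hab) x hx
        have h3 := ((q0.hasDerivAt x).hasDerivWithinAt
          (s := Set.Icc ((i:ℝ)/n) (((i:ℝ)+1)/n))).derivWithin hu
        have hderiv : derivWithin g₀ (Set.Icc 0 1) x = q0.derivative.eval x := by
          rw [← h2.derivWithin hu, h3]
        show β x * derivWithin g₀ (Set.Icc 0 1) x + α x * g₁ x = _
        rw [hβ' x, hα' x, hderiv, hq1 x hx]
        simp
  refine ⟨key, ?_, ?_⟩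
  · intro u
    constructor
    · have : (fun v => g u v) = fun v =>
          g₀ v + (β v * derivWithin g₀ (Set.Icc 0 1) v + α v * g₁ v) * u :=
        funext fun v => hg u v
      rw [this]
      exact (hg₀.1.of_le (by exact_mod_cast Nat.le_succ r)).add (key.1.mul contDiffOn_const)
    · intro i hi
      obtain ⟨q0, hq0deg, hq0⟩ := hg₀.2 i hi
      obtain ⟨Q, hQd, hQe⟩ := key.2 i hi
      refine ⟨q0 + Q * Polynomial.C u, ?_, ?_⟩
      · refine le_trans (Polynomial.natDegree_add_le _ _) (max_le hq0deg ?_)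
        exact le_trans Polynomial.natDegree_mul_le (by simpa using hQd)
      · intro x hx
        show g u x = _
        rw [hg u x, hq0 x hx]
        have := hQe x hx
        simp only at this
        simp [this]
  · intro v
    exact ⟨g₀ v, β v * derivWithin g₀ (Set.Icc 0 1) v + α v * g₁ v, fun u => hg u v⟩
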